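/- Every element of the Bohl algebra B that is bounded on ℝ is a generalized trigonometric polynomial; in particular every bounded element of B belongs to AP. -/

import Mathlib

open Complex

noncomputable section

/-- The Bohl algebra: the subalgebra of functions `ℝ → ℂ` (pointwise operations)
spanned over `ℂ` by the functions `t ↦ t^k * exp (λ * t)`, `k ∈ ℕ`, `λ ∈ ℂ`. -/
def Bohl : Subalgebra ℂ (ℝ → ℂ) :=
  Algebra.adjoin ℂ
    {g : ℝ → ℂ | ∃ (k : ℕ) (l : ℂ), g = fun t : ℝ => (t : ℂ) ^ k * Complex.exp (l * t)}

/-- A generalized trigonometric polynomial: `t ↦ ∑ aⱼ exp(i λⱼ t)` with `aⱼ ∈ ℂ`, `λⱼ ∈ ℝ`. -/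
def IsTrigPoly (f : ℝ → ℂ) : Prop :=
  ∃ (N : ℕ) (a : Fin N → ℂ) (l : Fin N → ℝ),
    f = fun t : ℝ => ∑ j, a j * Complex.exp (Complex.I * (l j : ℂ) * (t : ℂ))

/-- Membership in AP: the sup-norm closure, inside bounded continuous functions `ℝ → ℂ`,
of the set of generalized trigonometric polynomials. -/
def APMem (f : ℝ → ℂ) : Prop :=
  Continuous f ∧ (∃ M : ℝ, ∀ t : ℝ, ‖f t‖ ≤ M) ∧
    ∀ ε : ℝ, 0 < ε → ∃ p : ℝ → ℂ, IsTrigPoly p ∧ ∀ t : ℝ, ‖f t - p t‖ ≤ ε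

open Polynomial Finset

namespace BohlAux

def S (F : Finset ℂ) (P : ℂ → Polynomial ℂ) : ℝ → ℂ :=
  fun t => ∑ l ∈ F, (P l).eval (t : ℂ) * Complex.exp (l * t)

def Bdd (q : ℝ → ℂ) : Prop := ∃ M : ℝ, ∀ t : ℝ, ‖q t‖ ≤ M

lemma bdd_congr {q q' : ℝ → ℂ} (h : ∀ t, q t = q' t) (hq : Bdd q) : Bdd q' := by
  obtain ⟨M, hM⟩ := hq; exact ⟨M, fun t => (h t) ▸ hM t⟩

lemma poly_lower (Q : Polynomial ℂ) (hQ : Q ≠ 0) :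
    ∃ T : ℝ, 1 ≤ T ∧ ∀ t : ℝ, T ≤ t →
      ‖Q.leadingCoeff‖ / 2 * t ^ Q.natDegree ≤ ‖Q.eval ↑t‖ := by
  have hL0 : 0 < ‖Q.leadingCoeff‖ :=
    norm_pos_iff.mpr (Polynomial.leadingCoeff_ne_zero.mpr hQ)
  by_cases hd : Q.natDegree = 0
  · refine ⟨1, le_rfl, fun t ht => ?_⟩
    rw [hd, pow_zero, mul_one]
    have h1 : Q.eval (↑t : ℂ) = Q.coeff 0 := by
      conv_lhs => rw [Polynomial.eq_C_of_natDegree_eq_zero hd]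
      simp
    have h2 : Q.leadingCoeff = Q.coeff 0 := by rw [Polynomial.leadingCoeff, hd]
    rw [h1, ← h2]; linarith
  · set d := Q.natDegree with hdd
    set L := ‖Q.leadingCoeff‖ with hLdef
    set C' := ∑ k ∈ Finset.range d, ‖Q.coeff k‖ with hC'def
    have hC0 : 0 ≤ C' := Finset.sum_nonneg fun k _ => (norm_nonneg _)
    refine ⟨max 1 (2 * C' / L), le_max_left _ _, fun t ht => ?_⟩
    have ht1 : (1:ℝ) ≤ t := le_trans (le_max_left _ _) ht
    have ht2 : 2 * C' / L ≤ t := le_trans (le_max_right _ _) ht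
    have ht0 : 0 < t := lt_of_lt_of_le one_pos ht1
    have hev : Q.eval (↑t : ℂ) =
        Q.coeff d * (↑t:ℂ)^d + ∑ k ∈ Finset.range d, Q.coeff k * (↑t:ℂ)^k := by
      rw [Polynomial.eval_eq_sum_range, Finset.sum_range_succ]; ring
    have hrest : ‖∑ k ∈ Finset.range d, Q.coeff k * (↑t:ℂ)^k‖ ≤ C' * t^(d-1) := by
      calc ‖∑ k ∈ Finset.range d, Q.coeff k * (↑t:ℂ)^k‖
          ≤ ∑ k ∈ Finset.range d, ‖Q.coeff k * (↑t:ℂ)^k‖ :=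
            norm_sum_le _ _
        _ = ∑ k ∈ Finset.range d, ‖Q.coeff k‖ * t^k := by
            apply Finset.sum_congr rfl; intro k _
            rw [norm_mul, norm_pow, Complex.norm_real, Real.norm_eq_abs, abs_of_pos ht0]
        _ ≤ ∑ k ∈ Finset.range d, ‖Q.coeff k‖ * t^(d-1) := by
            apply Finset.sum_le_sum; intro k hk
            exact mul_le_mul_of_nonneg_left
              (pow_le_pow_right₀ ht1 (Nat.le_sub_one_of_lt (Finset.mem_range.mp hk)))
              (norm_nonneg _)
        _ = C' * t^(d-1) := by rw [← Finset.sum_mul]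
    have hlead : ‖Q.coeff d * (↑t:ℂ)^d‖ = L * t^d := by
      rw [norm_mul, norm_pow, Complex.norm_real, Real.norm_eq_abs, abs_of_pos ht0]
      rfl
    have htri : L * t^d ≤ ‖Q.eval ↑t‖ + C' * t^(d-1) := by
      have heq : Q.coeff d * (↑t:ℂ)^d = Q.eval ↑t - ∑ k ∈ Finset.range d, Q.coeff k * (↑t:ℂ)^k := by
        rw [hev]; ring
      have h5 : ‖Q.coeff d * (↑t:ℂ)^d‖
          ≤ ‖Q.eval ↑t‖ + ‖∑ k ∈ Finset.range d, Q.coeff k * (↑t:ℂ)^k‖ := by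
        rw [heq]
        simpa using
          norm_sub_le (Q.eval (↑t:ℂ)) (∑ k ∈ Finset.range d, Q.coeff k * (↑t:ℂ)^k)
      rw [hlead] at h5
      linarith
    have hpow : t^d = t * t^(d-1) := by
      rw [← pow_succ']; congr 1; omega
    have hC'le : C' ≤ L/2 * t := by
      rw [div_le_iff₀ hL0] at ht2
      linarith
    have hfin : C' * t^(d-1) ≤ L/2 * t^d := by
      rw [hpow, ← mul_assoc]
      exact mul_le_mul_of_nonneg_right hC'le (pow_nonneg ht0.le _)
    linarith
lemma mul_ofReal_re (l : ℂ) (t : ℝ) : (l * (t:ℂ)).re = l.re * t := by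
  simp [Complex.mul_re]

lemma single_re (Q : Polynomial ℂ) (hQ : Q ≠ 0) (l : ℂ) (hre : 0 < l.re) (M : ℝ)
    (hb : ∀ t : ℝ, ‖Q.eval ↑t * Complex.exp (l * ↑t)‖ ≤ M) : False := by
  have hL0 : 0 < ‖Q.leadingCoeff‖ :=
    norm_pos_iff.mpr (Polynomial.leadingCoeff_ne_zero.mpr hQ)
  set L := ‖Q.leadingCoeff‖ with hLdef
  obtain ⟨T, hT1, hT⟩ := poly_lower Q hQ
  have key : ∀ t : ℝ, T ≤ t → L/2 * Real.exp (l.re * t) ≤ M := by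
    intro t ht
    have h1 := hT t ht
    have habs : ‖Q.eval ↑t * Complex.exp (l * ↑t)‖
        = ‖Q.eval ↑t‖ * Real.exp (l.re * t) := by
      rw [norm_mul, Complex.norm_exp, mul_ofReal_re]
    have h2 := hb t; rw [habs] at h2
    have ht1 : (1:ℝ) ≤ t := hT1.trans ht
    have htpow : (1:ℝ) ≤ t ^ Q.natDegree := one_le_pow₀ ht1
    calc L/2 * Real.exp (l.re * t)
        ≤ L/2 * t ^ Q.natDegree * Real.exp (l.re * t) := by
          have hp : 0 ≤ (t ^ Q.natDegree - 1) * (L/2 * Real.exp (l.re * t)) :=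
            mul_nonneg (sub_nonneg.mpr htpow)
              (mul_pos (half_pos hL0) (Real.exp_pos _)).le
          nlinarith [hp]
      _ ≤ ‖Q.eval ↑t‖ * Real.exp (l.re * t) :=
          mul_le_mul_of_nonneg_right h1 (Real.exp_pos _).le
      _ ≤ M := h2
  have hM : 0 < M :=
    lt_of_lt_of_le (by positivity) (key T le_rfl)
  set t0 := max T ((Real.log (2*M/L) + 1) / l.re) with ht0def
  have h3 := key t0 (le_max_left _ _)
  have h4 : Real.log (2*M/L) + 1 ≤ l.re * t0 := by
    have := le_max_right T ((Real.log (2*M/L) + 1) / l.re)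
    rw [div_le_iff₀ hre] at this
    linarith [this]
  have h5 : 2*M/L < Real.exp (l.re * t0) := by
    calc 2*M/L = Real.exp (Real.log (2*M/L)) := (Real.exp_log (by positivity)).symm
      _ < Real.exp (l.re * t0) := Real.exp_lt_exp.mpr (by linarith)
  rw [div_lt_iff₀ hL0] at h5
  nlinarith

lemma neg_comp_ne_zero (Q : Polynomial ℂ) (hQ : Q ≠ 0) : Q.comp (-X) ≠ 0 := by
  intro h0
  apply hQ
  have h1 : (Q.comp (-X)).comp (-X) = Q := by
    rw [Polynomial.comp_assoc]
    simp
  rw [h0, Polynomial.zero_comp] at h1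
  exact h1.symm

lemma single_term (Q : Polynomial ℂ) (hQ : Q ≠ 0) (l : ℂ) (M : ℝ)
    (hb : ∀ t : ℝ, ‖Q.eval ↑t * Complex.exp (l * ↑t)‖ ≤ M) :
    l.re = 0 ∧ Q.natDegree = 0 := by
  have hre : l.re = 0 := by
    rcases lt_trichotomy l.re 0 with h|h|h
    · exfalso
      apply single_re (Q.comp (-X)) (neg_comp_ne_zero Q hQ) (-l) (by simpa using h) M
      intro t
      have h6 : (Q.comp (-X)).eval (↑t:ℂ) * Complex.exp (-l * ↑t)
          = Q.eval (↑(-t):ℂ) * Complex.exp (l * ↑(-t)) := by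
        rw [Polynomial.eval_comp]
        simp only [Polynomial.eval_neg, Polynomial.eval_X]
        push_cast
        ring_nf
      rw [h6]; exact hb (-t)
    · exact h
    · exact absurd (single_re Q hQ l h M hb) not_false
  refine ⟨hre, ?_⟩
  by_contra hd
  have hL0 : 0 < ‖Q.leadingCoeff‖ :=
    norm_pos_iff.mpr (Polynomial.leadingCoeff_ne_zero.mpr hQ)
  set L := ‖Q.leadingCoeff‖ with hLdef
  obtain ⟨T, hT1, hT⟩ := poly_lower Q hQ
  have hb' : ∀ t : ℝ, ‖Q.eval ↑t‖ ≤ M := by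
    intro t
    have := hb t
    rwa [norm_mul, Complex.norm_exp, mul_ofReal_re, hre, zero_mul, Real.exp_zero, mul_one] at this
  set t0 := max T (2*(M+1)/L) with ht0def
  have h1 := hT t0 (le_max_left _ _)
  have h2 := hb' t0
  have ht01 : (1:ℝ) ≤ t0 := hT1.trans (le_max_left _ _)
  have h7 : t0 ≤ t0 ^ Q.natDegree := le_self_pow₀ ht01 hd
  have h8 : 2*(M+1)/L ≤ t0 := le_max_right _ _
  rw [div_le_iff₀ hL0] at h8
  nlinarith

lemma exists_good_s (mu : ℂ) (hmu : mu ≠ 0) : ∃ s : ℝ, Complex.exp (mu * s) ≠ 1 := by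
  by_cases hre : mu.re = 0
  · have him : mu.im ≠ 0 := by
      intro h; apply hmu; exact Complex.ext hre h
    refine ⟨Real.pi / mu.im, ?_⟩
    have heq : mu * (↑(Real.pi / mu.im) : ℂ) = ↑Real.pi * Complex.I := by
      have hmueq : mu = ↑mu.im * Complex.I := by
        rw [← Complex.re_add_im mu, hre]; simp
      rw [hmueq]
      push_cast
      have : (mu.im : ℂ) ≠ 0 := by exact_mod_cast him
      field_simp
      simp [Complex.mul_im, this]
    rw [heq, Complex.exp_pi_mul_I]
    norm_num
  · refine ⟨1, fun h => hre ?_⟩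
    have h1 := congrArg norm h
    rw [Complex.norm_exp, norm_one] at h1
    have : (mu * (1:ℝ)).re = mu.re := by simp
    rw [this] at h1
    exact (Real.exp_eq_one_iff _).mp h1

lemma taylor_leadingCoeff (p : Polynomial ℂ) (s : ℂ) :
    (Polynomial.taylor s p).leadingCoeff = p.leadingCoeff := by
  by_cases hp : p = 0
  · simp [hp]
  · rw [Polynomial.taylor_apply,
      Polynomial.leadingCoeff_comp (by simp : (X + C s).natDegree ≠ 0)]
    simp

lemma taylor_ne_zero' (p : Polynomial ℂ) (s : ℂ) (hp : p ≠ 0) :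
    Polynomial.taylor s p ≠ 0 := by
  intro h
  apply Polynomial.leadingCoeff_ne_zero.mpr hp
  rw [← taylor_leadingCoeff p s, h, Polynomial.leadingCoeff_zero]

lemma taylor_degree (p : Polynomial ℂ) (s : ℂ) :
    (Polynomial.taylor s p).degree = p.degree := by
  by_cases hp : p = 0
  · simp [hp]
  · rw [Polynomial.degree_eq_natDegree (taylor_ne_zero' p s hp),
      Polynomial.degree_eq_natDegree hp, Polynomial.natDegree_taylor]

lemma S_shift (F : Finset ℂ) (P : ℂ → Polynomial ℂ) (l₁ : ℂ) (s : ℝ) (t : ℝ) :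
    S F (fun l => Complex.exp (l * s) • (Polynomial.taylor (s:ℂ) (P l))
        - Complex.exp (l₁ * s) • P l) t
      = S F P (t + s) - Complex.exp (l₁ * s) * S F P t := by
  unfold S
  rw [Finset.mul_sum, ← Finset.sum_sub_distrib]
  apply Finset.sum_congr rfl
  intro l _
  rw [Polynomial.eval_sub, Polynomial.eval_smul, Polynomial.eval_smul, Polynomial.taylor_eval]
  push_cast
  have hexp : Complex.exp (l * (↑t + ↑s)) = Complex.exp (l * ↑t) * Complex.exp (l * ↑s) := by
    rw [← Complex.exp_add]; ring_nf
  rw [hexp]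
  simp only [smul_eq_mul]
  ring

lemma shift_step (F : Finset ℂ) (P : ℂ → Polynomial ℂ) (l₀ l₁ : ℂ) (h01 : l₀ ≠ l₁)
    (hbd : Bdd (S F P)) :
    ∃ P' : ℂ → Polynomial ℂ, Bdd (S F P') ∧
      (P' l₁ = 0 ∨ (P' l₁).degree < (P l₁).degree) ∧
      (P' l₀).natDegree = (P l₀).natDegree ∧ (P l₀ ≠ 0 → P' l₀ ≠ 0) := by
  obtain ⟨s, hs1⟩ := exists_good_s (l₀ - l₁) (sub_ne_zero.mpr h01)
  have hne : Complex.exp (l₀ * s) ≠ Complex.exp (l₁ * s) := by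
    intro h
    apply hs1
    rw [sub_mul, Complex.exp_sub, h, div_self (Complex.exp_ne_zero _)]
  set P' : ℂ → Polynomial ℂ := fun l =>
    Complex.exp (l * s) • (Polynomial.taylor (s:ℂ) (P l)) - Complex.exp (l₁ * s) • P l with hP'
  refine ⟨P', ?_, ?_, ?_⟩
  · obtain ⟨M, hM⟩ := hbd
    refine ⟨M + ‖Complex.exp (l₁ * s)‖ * M, fun t => ?_⟩
    rw [S_shift]
    calc ‖S F P (t + s) - Complex.exp (l₁ * s) * S F P t‖
        ≤ ‖S F P (t + s)‖ + ‖Complex.exp (l₁ * s) * S F P t‖ := by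
          simpa using
            norm_sub_le (S F P (t + s)) (Complex.exp (l₁ * s) * S F P t)
      _ ≤ M + ‖Complex.exp (l₁ * s)‖ * M := by
          rw [norm_mul]
          have h1 := hM (t + s)
          have h2 := mul_le_mul_of_nonneg_left (hM t) (norm_nonneg (Complex.exp (l₁ * s)))
          linarith
  · have hP'l₁ : P' l₁ = Complex.exp (l₁ * s) • (Polynomial.taylor (s:ℂ) (P l₁) - P l₁) := by
      rw [hP', smul_sub]
    by_cases h0 : P l₁ = 0
    · left; rw [hP'l₁, h0]; simp
    · right
      rw [hP'l₁, Polynomial.smul_eq_C_mul, Polynomial.degree_C_mul (Complex.exp_ne_zero _)]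
      exact (Polynomial.degree_sub_lt (taylor_degree _ _) (taylor_ne_zero' _ _ h0)
        (taylor_leadingCoeff _ _)).trans_le (le_of_eq (taylor_degree _ _))
  · by_cases h0 : P l₀ = 0
    · constructor
      · rw [hP']; simp [h0]
      · intro h; exact absurd h0 h
    · set d := (P l₀).natDegree with hd
      have hcoeff : (P' l₀).coeff d
          = (Complex.exp (l₀ * s) - Complex.exp (l₁ * s)) * (P l₀).coeff d := by
        rw [hP']
        simp only [Polynomial.coeff_sub, Polynomial.coeff_smul, smul_eq_mul]
        have htc : (Polynomial.taylor (s:ℂ) (P l₀)).coeff d = (P l₀).coeff d := by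
          have h1 : (Polynomial.taylor (s:ℂ) (P l₀)).coeff d
              = (Polynomial.taylor (s:ℂ) (P l₀)).leadingCoeff := by
            rw [Polynomial.leadingCoeff, Polynomial.natDegree_taylor]
          rw [h1, taylor_leadingCoeff]
          rfl
        rw [htc]; ring
      have hcne : (P' l₀).coeff d ≠ 0 := by
        rw [hcoeff]
        exact mul_ne_zero (sub_ne_zero.mpr hne) (Polynomial.leadingCoeff_ne_zero.mpr h0)
      constructor
      · apply le_antisymm
        · apply (Polynomial.natDegree_sub_le _ _).trans
          apply max_le
          · exact (Polynomial.natDegree_smul_le _ _).trans (le_of_eq (Polynomial.natDegree_taylor _ _))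
          · exact Polynomial.natDegree_smul_le _ _
        · exact Polynomial.le_natDegree_of_ne_zero hcne
      · intro _
        intro h
        rw [h] at hcne
        simp at hcne

lemma S_erase (F : Finset ℂ) (P : ℂ → Polynomial ℂ) (l₁ : ℂ) (h : P l₁ = 0) :
    ∀ t, S F P t = S (F.erase l₁) P t := by
  intro t; unfold S
  exact (Finset.sum_erase F (by simp [h])).symm

lemma elim_one : ∀ (n : ℕ) (F : Finset ℂ) (P : ℂ → Polynomial ℂ) (l₀ l₁ : ℂ), l₀ ≠ l₁ →
    (P l₁).natDegree ≤ n → Bdd (S F P) →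
    ∃ P' : ℂ → Polynomial ℂ, Bdd (S (F.erase l₁) P') ∧
      (P' l₀).natDegree = (P l₀).natDegree ∧ (P l₀ ≠ 0 → P' l₀ ≠ 0) := by
  intro n
  induction n with
  | zero =>
    intro F P l₀ l₁ h01 hdeg hbd
    by_cases h0 : P l₁ = 0
    · exact ⟨P, bdd_congr (S_erase F P l₁ h0) hbd, rfl, fun h => h⟩
    · obtain ⟨P', hbd', hcase, hdeq, hnz⟩ := shift_step F P l₀ l₁ h01 hbd
      have h0' : P' l₁ = 0 := by
        rcases hcase with h|h
        · exact h
        · have hdz : (P l₁).degree = 0 := by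
            rw [Polynomial.degree_eq_natDegree h0]
            exact_mod_cast congrArg Nat.cast (Nat.le_zero.mp hdeg)
          rw [hdz] at h
          exact Polynomial.degree_eq_bot.mp (Nat.WithBot.lt_zero_iff.mp h)
      exact ⟨P', bdd_congr (S_erase F P' l₁ h0') hbd', hdeq, hnz⟩
  | succ n ih =>
    intro F P l₀ l₁ h01 hdeg hbd
    by_cases h0 : P l₁ = 0
    · exact ⟨P, bdd_congr (S_erase F P l₁ h0) hbd, rfl, fun h => h⟩
    · obtain ⟨P', hbd', hcase, hdeq, hnz⟩ := shift_step F P l₀ l₁ h01 hbd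
      have hd' : (P' l₁).natDegree ≤ n := by
        rcases hcase with h|h
        · rw [h]; simp
        · by_cases h0' : P' l₁ = 0
          · rw [h0']; simp
          · have := Polynomial.natDegree_lt_natDegree h0' h
            omega
      obtain ⟨P'', hbd'', hdeq', hnz'⟩ := ih F P' l₀ l₁ h01 hd' hbd'
      exact ⟨P'', hbd'', hdeq'.trans hdeq, fun h => hnz' (hnz h)⟩

lemma isolate : ∀ (n : ℕ) (F : Finset ℂ) (P : ℂ → Polynomial ℂ) (l₀ : ℂ), F.card ≤ n → l₀ ∈ F →
    Bdd (S F P) → ∃ Q : Polynomial ℂ, Bdd (fun t : ℝ => Q.eval ↑t * Complex.exp (l₀ * t)) ∧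
      Q.natDegree = (P l₀).natDegree ∧ (P l₀ ≠ 0 → Q ≠ 0) := by
  intro n; induction n with
  | zero =>
    intro F P l₀ hcard hmem _
    have := Finset.card_pos.mpr ⟨l₀, hmem⟩
    omega
  | succ n ih =>
    intro F P l₀ hcard hmem hbd
    by_cases hF : F = {l₀}
    · refine ⟨P l₀, ?_, rfl, fun h => h⟩
      apply bdd_congr _ hbd
      intro t; rw [hF]; unfold S; rw [Finset.sum_singleton]
    · have hex : ∃ l₁ ∈ F, l₁ ≠ l₀ := by
        by_contra hc; push_neg at hc
        exact hF (Finset.eq_singleton_iff_unique_mem.mpr ⟨hmem, fun x hx => hc x hx⟩)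
      obtain ⟨l₁, hl₁F, hl₁⟩ := hex
      obtain ⟨P', hbd', hdeq, hnz⟩ :=
        elim_one ((P l₁).natDegree) F P l₀ l₁ (Ne.symm hl₁) le_rfl hbd
      have hcard' : (F.erase l₁).card ≤ n := by
        have := Finset.card_erase_of_mem hl₁F; omega
      have hmem' : l₀ ∈ F.erase l₁ := Finset.mem_erase.mpr ⟨Ne.symm hl₁, hmem⟩
      obtain ⟨Q, hQbd, hQd, hQnz⟩ := ih (F.erase l₁) P' l₀ hcard' hmem' hbd'
      exact ⟨Q, hQbd, hQd.trans hdeq, fun h => hQnz (hnz h)⟩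

lemma main_vanish (F : Finset ℂ) (P : ℂ → Polynomial ℂ) (hbd : Bdd (S F P)) :
    ∀ l ∈ F, P l ≠ 0 → l.re = 0 ∧ (P l).natDegree = 0 := by
  intro l hl hPl
  obtain ⟨Q, ⟨M, hM⟩, hQd, hQnz⟩ := isolate F.card F P l le_rfl hl hbd
  obtain ⟨h1, h2⟩ := single_term Q (hQnz hPl) l M hM
  exact ⟨h1, by rw [← hQd]; exact h2⟩

def genSet : Set (ℝ → ℂ) :=
  {g : ℝ → ℂ | ∃ (k : ℕ) (l : ℂ), g = fun t : ℝ => (t : ℂ) ^ k * Complex.exp (l * t)}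

def genSubmonoid : Submonoid (ℝ → ℂ) where
  carrier := genSet
  one_mem' := ⟨0, 0, by funext t; simp⟩
  mul_mem' := by
    rintro a b ⟨k, l, rfl⟩ ⟨k', l', rfl⟩
    refine ⟨k + k', l + l', ?_⟩
    funext t
    show ((t:ℂ)^k * Complex.exp (l * t)) * ((t:ℂ)^k' * Complex.exp (l' * t)) = _
    rw [pow_add, add_mul, Complex.exp_add]
    ring

lemma mem_rep (f : ℝ → ℂ) (hf : f ∈ Bohl) :
    ∃ (F : Finset ℂ) (P : ℂ → Polynomial ℂ), ∀ t, f t = S F P t := by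
  classical
  have hsub : f ∈ Submodule.span ℂ genSet := by
    have h1 : f ∈ Submodule.span ℂ
        ((Submonoid.closure genSet : Submonoid (ℝ → ℂ)) : Set (ℝ → ℂ)) := by
      have h2 := Algebra.adjoin_eq_span ℂ genSet
      have h3 : f ∈ Subalgebra.toSubmodule (Algebra.adjoin ℂ genSet) := hf
      rw [h2] at h3
      exact h3
    have hclos : ((Submonoid.closure genSet : Submonoid (ℝ → ℂ)) : Set (ℝ → ℂ)) ⊆ genSet := by
      have h4 : Submonoid.closure genSet ≤ genSubmonoid :=
        Submonoid.closure_le.mpr (le_refl genSet)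
      exact fun x hx => h4 hx
    exact Submodule.span_mono hclos h1
  refine Submodule.span_induction ?_ ?_ ?_ ?_ hsub
  · rintro x ⟨k, l, rfl⟩
    refine ⟨{l}, fun _ => Polynomial.X ^ k, fun t => ?_⟩
    unfold S
    rw [Finset.sum_singleton, Polynomial.eval_pow, Polynomial.eval_X]
  · exact ⟨∅, fun _ => 0, fun t => by unfold S; simp⟩
  · rintro x y _ _ ⟨F₁, P₁, hx⟩ ⟨F₂, P₂, hy⟩
    refine ⟨F₁ ∪ F₂, fun l => (if l ∈ F₁ then P₁ l else 0) + (if l ∈ F₂ then P₂ l else 0),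
      fun t => ?_⟩
    have hsum : S (F₁ ∪ F₂)
        (fun l => (if l ∈ F₁ then P₁ l else 0) + (if l ∈ F₂ then P₂ l else 0)) t
        = S F₁ P₁ t + S F₂ P₂ t := by
      unfold S
      simp only [Polynomial.eval_add, apply_ite (Polynomial.eval (↑t : ℂ)),
        Polynomial.eval_zero, add_mul, ite_mul, zero_mul]
      rw [Finset.sum_add_distrib, Finset.sum_ite_mem, Finset.sum_ite_mem,
        Finset.union_inter_cancel_left, Finset.union_inter_cancel_right]
    rw [Pi.add_apply, hx t, hy t, hsum]
  · rintro a x _ ⟨F, P, hx⟩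
    refine ⟨F, fun l => Polynomial.C a * P l, fun t => ?_⟩
    have hsum : S F (fun l => Polynomial.C a * P l) t = a * S F P t := by
      unfold S
      rw [Finset.mul_sum]
      apply Finset.sum_congr rfl
      intro l _
      rw [Polynomial.eval_mul, Polynomial.eval_C, mul_assoc]
    rw [Pi.smul_apply, smul_eq_mul, hx t, hsum]

end BohlAux

/-- Every element of the Bohl algebra that is bounded on `ℝ` is a generalized
trigonometric polynomial; in particular it belongs to AP. -/
theorem bounded_bohl_is_trigPoly (f : ℝ → ℂ) (hf : f ∈ Bohl)
    (hbd : ∃ M : ℝ, ∀ t : ℝ, ‖f t‖ ≤ M) :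
    IsTrigPoly f ∧ APMem f := by
  classical
  obtain ⟨F, P, hrep⟩ := BohlAux.mem_rep f hf
  have hbd' : BohlAux.Bdd (BohlAux.S F P) := by
    obtain ⟨M, hM⟩ := hbd
    exact ⟨M, fun t => by rw [← hrep t]; exact hM t⟩
  have hvan := BohlAux.main_vanish F P hbd'
  set F' : Finset ℂ := F.filter (fun l => P l ≠ 0) with hF'
  have hmemF' : ∀ l ∈ F', l.re = 0 ∧ (P l).natDegree = 0 := by
    intro l hl
    obtain ⟨h1, h2⟩ := Finset.mem_filter.mp hl
    exact hvan l h1 h2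
  have hrep2 : ∀ t : ℝ, f t = ∑ l ∈ F', (P l).coeff 0 * Complex.exp (l * t) := by
    intro t
    rw [hrep t]
    unfold BohlAux.S
    rw [← Finset.sum_filter_of_ne
      (fun x _ h => by intro h0; apply h; rw [h0]; simp : ∀ x ∈ F,
        (P x).eval (↑t:ℂ) * Complex.exp (x * ↑t) ≠ 0 → P x ≠ 0)]
    apply Finset.sum_congr rfl
    intro l hl
    have h2 := (hmemF' l hl).2
    conv_lhs => rw [Polynomial.eq_C_of_natDegree_eq_zero h2]
    rw [Polynomial.eval_C]
  have hkey : ∀ l ∈ F', (l : ℂ) = Complex.I * (l.im : ℂ) := by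
    intro l hl
    have h1 := (hmemF' l hl).1
    rw [← Complex.re_add_im l, h1]
    simp [mul_comm]
  set N := F'.card with hN
  set e := F'.equivFin with he
  set a : Fin N → ℂ := fun j => (P ((e.symm j : ℂ))).coeff 0 with ha
  set lf : Fin N → ℝ := fun j => ((e.symm j : ℂ)).im with hlf
  have htrig : f = fun t : ℝ => ∑ j, a j * Complex.exp (Complex.I * (lf j : ℂ) * (t : ℂ)) := by
    funext t
    rw [hrep2 t]
    have hc : ∀ x : {x // x ∈ F'},
        a (e x) * Complex.exp (Complex.I * (lf (e x) : ℂ) * (t : ℂ))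
          = (P (x : ℂ)).coeff 0 * Complex.exp ((x : ℂ) * t) := by
      intro x
      have hx : (x : ℂ) ∈ F' := x.2
      rw [ha, hlf]
      simp only [Equiv.symm_apply_apply]
      rw [← hkey (x : ℂ) hx]
    calc ∑ l ∈ F', (P l).coeff 0 * Complex.exp (l * t)
        = ∑ x : {x // x ∈ F'}, (P (x : ℂ)).coeff 0 * Complex.exp ((x : ℂ) * t) :=
          (Finset.sum_coe_sort F' _).symm
      _ = ∑ x : {x // x ∈ F'},
            a (e x) * Complex.exp (Complex.I * (lf (e x) : ℂ) * (t : ℂ)) := by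
          exact (Finset.sum_congr rfl (fun x _ => (hc x).symm))
      _ = ∑ j, a j * Complex.exp (Complex.I * (lf j : ℂ) * (t : ℂ)) :=
          Equiv.sum_comp e (fun j => a j * Complex.exp (Complex.I * (lf j : ℂ) * (t : ℂ)))
  have hTP : IsTrigPoly f := ⟨N, a, lf, htrig⟩
  refine ⟨hTP, ?_, hbd, ?_⟩
  · rw [htrig]
    exact continuous_finset_sum _ fun j _ =>
      continuous_const.mul (Complex.continuous_exp.comp
        (continuous_const.mul Complex.continuous_ofReal))
  · intro ε hε
    exact ⟨f, hTP, fun t => by simp [le_of_lt hε]⟩
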